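/- Let J, K : ℝ² → M₂(ℂ) (coordinates denoted (z, z̃)) with J continuously differentiable in z, the (2,2)-entry J₂₂ nowhere zero, and suppose ∂_z J = −[K, σ₃]J. Define u = K₂₁ and v = i·J₁₂/J₂₂. Then ∂_z v = 2i·K₁₂ − 2i·v²·u; that is, in the rescaled coordinates (x, t) = (2z̃, 2z) the Riccati-type Miura relation v_t = i·K₁₂ − i·v²·u holds. -/

import Mathlib

open Matrix

/-- Partial derivative with respect to the first coordinate `z`. -/
noncomputable def pdz (f : ℝ × ℝ → ℂ) (p : ℝ × ℝ) : ℂ :=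
  deriv (fun s => f (s, p.2)) p.1

/-- Entrywise `∂_z` of a matrix-valued function. -/
noncomputable def pdzM (J : ℝ × ℝ → Matrix (Fin 2) (Fin 2) ℂ) (p : ℝ × ℝ) :
    Matrix (Fin 2) (Fin 2) ℂ :=
  Matrix.of fun i j => pdz (fun q => J q i j) p

/-- The third Pauli matrix `σ₃ = diag(1, −1)`. -/
def sigma3 : Matrix (Fin 2) (Fin 2) ℂ := !![1, 0; 0, -1]

/-- if `J` is continuously differentiable in `z`, `J₂₂` is nowhere zero, and
`∂_z J = −[K,σ₃]J`, then `u = K₂₁`, `v = i·J₁₂/J₂₂` satisfy the Riccati-type Miura relation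
`∂_z v = 2i·K₁₂ − 2i·v²·u`. -/
theorem riccati_miura_relation
    (J K : ℝ × ℝ → Matrix (Fin 2) (Fin 2) ℂ)
    (hJz : ∀ (zt : ℝ) (i j : Fin 2), ContDiff ℝ 1 fun z : ℝ => J (z, zt) i j)
    (hJ22 : ∀ p, J p 1 1 ≠ 0)
    (hMiura : ∀ p, pdzM J p = -((K p * sigma3 - sigma3 * K p) * J p))
    (u v : ℝ × ℝ → ℂ)
    (hu : u = fun p => K p 1 0)
    (hv : v = fun p => Complex.I * J p 0 1 / J p 1 1) :
    ∀ p, pdz v p = 2 * Complex.I * K p 0 1 - 2 * Complex.I * (v p) ^ 2 * u p := by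
  rintro ⟨z, zt⟩
  have hf : HasDerivAt (fun s => J (s, zt) 0 1) (pdz (fun q => J q 0 1) (z, zt)) z :=
    (((hJz zt 0 1).differentiable one_ne_zero) z).hasDerivAt
  have hg : HasDerivAt (fun s => J (s, zt) 1 1) (pdz (fun q => J q 1 1) (z, zt)) z :=
    (((hJz zt 1 1).differentiable one_ne_zero) z).hasDerivAt
  have h01 : pdz (fun q => J q 0 1) (z, zt) = 2 * K (z, zt) 0 1 * J (z, zt) 1 1 := by
    have h := congrArg (fun M => M 0 1) (hMiura (z, zt))
    simp only [pdzM, Matrix.of_apply, Matrix.neg_apply, Matrix.mul_apply, Matrix.sub_apply,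
      Fin.sum_univ_two, sigma3, Matrix.cons_val', Matrix.cons_val_zero, Matrix.cons_val_one,
      Matrix.head_cons, Matrix.head_fin_const, Matrix.empty_val', Matrix.cons_val_fin_one] at h
    rw [h]; ring
  have h11 : pdz (fun q => J q 1 1) (z, zt) = -(2 * K (z, zt) 1 0 * J (z, zt) 0 1) := by
    have h := congrArg (fun M => M 1 1) (hMiura (z, zt))
    simp only [pdzM, Matrix.of_apply, Matrix.neg_apply, Matrix.mul_apply, Matrix.sub_apply,
      Fin.sum_univ_two, sigma3, Matrix.cons_val', Matrix.cons_val_zero, Matrix.cons_val_one,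
      Matrix.head_cons, Matrix.head_fin_const, Matrix.empty_val', Matrix.cons_val_fin_one] at h
    rw [h]; ring
  have hz : J (z, zt) 1 1 ≠ 0 := hJ22 (z, zt)
  have hv' : HasDerivAt (fun s => v (s, zt))
      ((Complex.I * pdz (fun q => J q 0 1) (z, zt) * J (z, zt) 1 1 -
        Complex.I * J (z, zt) 0 1 * pdz (fun q => J q 1 1) (z, zt)) / (J (z, zt) 1 1) ^ 2) z := by
    rw [hv]
    exact (hf.const_mul Complex.I).div hg hz
  show pdz v (z, zt) = _
  rw [pdz, hv'.deriv, h01, h11, hu, hv]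
  field_simp
  linear_combination (J (z, zt) 0 1 ^ 2 * K (z, zt) 1 0) * Complex.I_sq
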